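/- Let $C\geq 1$, $0<p\leq 1$, and let $\mu$ be a probability measure on ${\rm Mat}_m(\mathbb{R})$ with $\int\|g\|^p\,d\mu\leq C$ and $\sup_{\|v\|=1}\int\|gv\|^{-p}\,d\mu\leq C$. Then for every unit vector $v$ and every $T>0$, $\int_{\mathscr{B}_T(\hat v)} |\log\|gv\||\,d\mu(g) \leq \frac{3C}{p}e^{-pT/2}$, where $\mathscr{B}_T(\hat v)=\{g:\log\|gv\|<-T\text{ or }\log\|g\|>T\}$. -/

import Mathlib

open MeasureTheory ENNReal Classical

noncomputable section

lemma log_le_rpow_div {x q : ℝ} (hx : 0 < x) (hq : 0 < q) :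
    Real.log x ≤ x ^ q / (q * Real.exp 1) := by
  have h2 : Real.log (x ^ q / Real.exp 1) ≤ x ^ q / Real.exp 1 - 1 :=
    Real.log_le_sub_one_of_pos (by positivity)
  rw [Real.log_div (by positivity) (Real.exp_ne_zero 1), Real.log_exp,
    Real.log_rpow hx] at h2
  have h1 : q * Real.log x ≤ x ^ q / Real.exp 1 := by linarith
  rw [le_div_iff₀ (by positivity : (0:ℝ) < q * Real.exp 1)]
  rw [le_div_iff₀ (Real.exp_pos 1)] at h1
  nlinarith [Real.exp_pos 1]

lemma key_real {p T x N : ℝ} (hp0 : 0 < p) (hT : 0 < T) (hx : 0 < x) (hxN : x ≤ N)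
    (hB : x < Real.exp (-T) ∨ Real.exp T < N) :
    |Real.log x| ≤ 2 / (p * Real.exp 1) * Real.exp (-(p * T) / 2) * (N ^ p + x ^ (-p)) := by
  have hN : 0 < N := lt_of_lt_of_le hx hxN
  have he : (0:ℝ) < Real.exp 1 := Real.exp_pos 1
  have hq : 0 < p / 2 := by linarith
  set E : ℝ := Real.exp (-(p * T) / 2) with hEdef
  have hE : 0 < E := Real.exp_pos _
  have hexpT : (Real.exp T) ^ (p / 2) = E⁻¹ := by
    rw [← Real.exp_mul, hEdef, ← Real.exp_neg]; congr 1; ring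
  have hexpT' : (Real.exp (-T)) ^ (p / 2) = E := by
    rw [← Real.exp_mul, hEdef]; congr 1; ring
  have hcoef : 2 / (p * Real.exp 1) = ((p/2) * Real.exp 1)⁻¹ := by
    field_simp
  have hxp : 0 ≤ x ^ (-p) := Real.rpow_nonneg hx.le _
  have hNp : 0 ≤ N ^ p := Real.rpow_nonneg hN.le _
  rcases le_or_gt 1 x with h1 | h1
  · -- x ≥ 1, so necessarily exp T < N
    have hnot : ¬ x < Real.exp (-T) := by
      have : Real.exp (-T) < 1 := Real.exp_lt_one_iff.mpr (by linarith)
      linarith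
    have hTN : Real.exp T < N := hB.resolve_left hnot
    rw [abs_of_nonneg (Real.log_nonneg h1)]
    have step1 : Real.log x ≤ x ^ (p/2) / ((p/2) * Real.exp 1) := log_le_rpow_div hx hq
    have step2 : x ^ (p/2) ≤ N ^ (p/2) := Real.rpow_le_rpow hx.le hxN hq.le
    have step3 : N ^ (p/2) = N ^ p * N ^ (-(p/2)) := by
      rw [← Real.rpow_add hN]; ring_nf
    have step4 : N ^ (-(p/2)) ≤ (Real.exp T) ^ (-(p/2)) :=
      Real.rpow_le_rpow_of_nonpos (Real.exp_pos T) hTN.le (by linarith)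
    have step5 : (Real.exp T) ^ (-(p/2)) = E := by
      rw [Real.rpow_neg (Real.exp_pos T).le, hexpT, inv_inv]
    have h6 : N ^ (p/2) ≤ N ^ p * E := by
      calc N ^ (p/2) = N ^ p * N ^ (-(p/2)) := step3
        _ ≤ N ^ p * E := by rw [← step5]; exact mul_le_mul_of_nonneg_left step4 hNp
    calc Real.log x ≤ x ^ (p/2) / ((p/2) * Real.exp 1) := step1
      _ ≤ (N ^ p * E) / ((p/2) * Real.exp 1) :=
          div_le_div_of_nonneg_right (le_trans step2 h6) (by positivity)
      _ ≤ 2 / (p * Real.exp 1) * E * (N ^ p + x ^ (-p)) := by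
          rw [hcoef, div_eq_inv_mul, mul_assoc]
          refine mul_le_mul_of_nonneg_left ?_ (by positivity)
          nlinarith [mul_nonneg hE.le hxp]
  · -- x < 1
    have hlog : |Real.log x| ≤ x ^ (-(p/2)) / ((p/2) * Real.exp 1) := by
      rw [abs_of_nonpos (Real.log_nonpos hx.le h1.le)]
      have := log_le_rpow_div (x := x⁻¹) (by positivity) hq
      rw [Real.log_inv, Real.inv_rpow hx.le, ← Real.rpow_neg hx.le] at this
      linarith
    have hsplit : x ^ (-(p/2)) = x ^ (-p) * x ^ (p/2) := by
      rw [← Real.rpow_add hx]; ring_nf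
    rcases hB with h2 | h2
    · -- x < exp (-T)
      have step : x ^ (p/2) ≤ E := by
        rw [← hexpT']
        exact Real.rpow_le_rpow hx.le h2.le hq.le
      have : x ^ (-(p/2)) ≤ x ^ (-p) * E := by
        rw [hsplit]; exact mul_le_mul_of_nonneg_left step hxp
      calc |Real.log x| ≤ x ^ (-(p/2)) / ((p/2) * Real.exp 1) := hlog
        _ ≤ (x ^ (-p) * E) / ((p/2) * Real.exp 1) :=
            div_le_div_of_nonneg_right this (by positivity)
        _ ≤ 2 / (p * Real.exp 1) * E * (N ^ p + x ^ (-p)) := by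
            rw [hcoef, div_eq_inv_mul, mul_assoc]
            refine mul_le_mul_of_nonneg_left ?_ (by positivity)
            nlinarith [mul_nonneg hE.le hNp]
    · -- exp T < N
      have hone : (1:ℝ) ≤ N ^ (p/2) * E := by
        have : E⁻¹ ≤ N ^ (p/2) := by
          rw [← hexpT]; exact Real.rpow_le_rpow (Real.exp_pos T).le h2.le hq.le
        calc (1:ℝ) = E⁻¹ * E := by field_simp
          _ ≤ N ^ (p/2) * E := mul_le_mul_of_nonneg_right this hE.le
      have hamgm : x ^ (-(p/2)) * N ^ (p/2) ≤ (x ^ (-p) + N ^ p) / 2 := by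
        have ha : x ^ (-(p/2)) * x ^ (-(p/2)) = x ^ (-p) := by
          rw [← Real.rpow_add hx]; ring_nf
        have hb : N ^ (p/2) * N ^ (p/2) = N ^ p := by
          rw [← Real.rpow_add hN]; ring_nf
        nlinarith [sq_nonneg (x ^ (-(p/2)) - N ^ (p/2))]
      have hxe : 0 ≤ x ^ (-(p/2)) := Real.rpow_nonneg hx.le _
      have key : x ^ (-(p/2)) ≤ E * ((x ^ (-p) + N ^ p) / 2) := by
        calc x ^ (-(p/2)) = x ^ (-(p/2)) * 1 := by ring
          _ ≤ x ^ (-(p/2)) * (N ^ (p/2) * E) := mul_le_mul_of_nonneg_left hone hxe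
          _ = (x ^ (-(p/2)) * N ^ (p/2)) * E := by ring
          _ ≤ ((x ^ (-p) + N ^ p) / 2) * E := mul_le_mul_of_nonneg_right hamgm hE.le
          _ = E * ((x ^ (-p) + N ^ p) / 2) := by ring
      calc |Real.log x| ≤ x ^ (-(p/2)) / ((p/2) * Real.exp 1) := hlog
        _ ≤ (E * ((x ^ (-p) + N ^ p) / 2)) / ((p/2) * Real.exp 1) :=
            div_le_div_of_nonneg_right key (by positivity)
        _ ≤ 2 / (p * Real.exp 1) * E * (N ^ p + x ^ (-p)) := by
            rw [hcoef, div_eq_inv_mul, mul_assoc]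
            refine mul_le_mul_of_nonneg_left ?_ (by positivity)
            nlinarith [mul_nonneg hE.le (add_nonneg hxp hNp)]


abbrev Mat (m : ℕ) := EuclideanSpace ℝ (Fin m) →L[ℝ] EuclideanSpace ℝ (Fin m)

instance (m : ℕ) : MeasurableSpace (Mat m) := borel _
instance (m : ℕ) : BorelSpace (Mat m) := ⟨rfl⟩

/-- if `μ ∈ 𝓜^p_C`, then for every unit vector `v` and `T > 0`,
`∫_{𝓑_T(v̂)} |log ‖g v‖| dμ(g) ≤ (3C/p) e^{-pT/2}`, where
`𝓑_T(v̂) = {g : log ‖g v‖ < -T or log ‖g‖ > T}` (written via `‖g v‖ < e^{-T}` to also cover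
`g v = 0`, in which case the integrand is interpreted as `+∞`). -/
theorem integral_log_on_BT_le {m : ℕ} {p C : ℝ} (hp0 : 0 < p) (hp1 : p ≤ 1) (hC : 1 ≤ C)
    (μ : Measure (Mat m)) [IsProbabilityMeasure μ]
    (hbar : ∫⁻ g, (‖g‖₊ : ℝ≥0∞) ^ p ∂μ ≤ ENNReal.ofReal C)
    (hunder : ∀ v : EuclideanSpace ℝ (Fin m), ‖v‖ = 1 →
      ∫⁻ g, (‖g v‖₊ : ℝ≥0∞) ^ (-p) ∂μ ≤ ENNReal.ofReal C)
    (v : EuclideanSpace ℝ (Fin m)) (hv : ‖v‖ = 1) (T : ℝ) (hT : 0 < T) :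
    ∫⁻ g in {g : Mat m | ‖g v‖ < Real.exp (-T) ∨ Real.exp T < ‖g‖},
        (if g v = 0 then (⊤ : ℝ≥0∞) else ENNReal.ofReal |Real.log ‖g v‖|) ∂μ
      ≤ ENNReal.ofReal (3 * C / p * Real.exp (-(p * T) / 2)) := by
  set B : Set (Mat m) := {g : Mat m | ‖g v‖ < Real.exp (-T) ∨ Real.exp T < ‖g‖} with hB
  set k : ℝ := 2 / (p * Real.exp 1) * Real.exp (-(p * T) / 2) with hk
  have hkpos : 0 < k := by positivity
  have happly : Continuous fun g : Mat m => g v :=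
    (ContinuousLinearMap.apply ℝ (EuclideanSpace ℝ (Fin m)) v).continuous
  have hm1 : Measurable fun g : Mat m => (‖g‖₊ : ℝ≥0∞) ^ p :=
    measurable_nnnorm.coe_nnreal_ennreal.pow_const p
  have hm2 : Measurable fun g : Mat m => (‖g v‖₊ : ℝ≥0∞) ^ (-p) :=
    (happly.measurable.nnnorm.coe_nnreal_ennreal).pow_const (-p)
  have hBmeas : MeasurableSet B := by
    apply MeasurableSet.union
    · exact measurableSet_lt happly.norm.measurable measurable_const
    · exact measurableSet_lt measurable_const continuous_norm.measurable
  have hpt : ∀ g ∈ B, (if g v = 0 then (⊤ : ℝ≥0∞) else ENNReal.ofReal |Real.log ‖g v‖|)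
      ≤ ENNReal.ofReal k * ((‖g‖₊ : ℝ≥0∞) ^ p + (‖g v‖₊ : ℝ≥0∞) ^ (-p)) := by
    intro g hg
    by_cases h0 : g v = 0
    · rw [if_pos h0]
      have hz : ((‖g v‖₊ : ℝ≥0∞)) ^ (-p) = ⊤ := by
        rw [h0]; simp [ENNReal.zero_rpow_of_neg (neg_lt_zero.mpr hp0)]
      have hk0 : ENNReal.ofReal k ≠ 0 := by simp [ENNReal.ofReal_eq_zero, not_le, hkpos]
      rw [hz, add_top, ENNReal.mul_top hk0]
    · rw [if_neg h0]
      have hx : 0 < ‖g v‖ := norm_pos_iff.mpr h0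
      have hxN : ‖g v‖ ≤ ‖g‖ := by
        have := g.le_opNorm v; rwa [hv, mul_one] at this
      have hN : 0 < ‖g‖ := lt_of_lt_of_le hx hxN
      have key := key_real hp0 hT hx hxN hg
      calc ENNReal.ofReal |Real.log ‖g v‖|
          ≤ ENNReal.ofReal (k * (‖g‖ ^ p + ‖g v‖ ^ (-p))) := ENNReal.ofReal_le_ofReal key
        _ = ENNReal.ofReal k * (ENNReal.ofReal (‖g‖ ^ p) + ENNReal.ofReal (‖g v‖ ^ (-p))) := by
            rw [ENNReal.ofReal_mul hkpos.le,
              ENNReal.ofReal_add (Real.rpow_nonneg hN.le _) (Real.rpow_nonneg hx.le _)]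
        _ = ENNReal.ofReal k * ((‖g‖₊ : ℝ≥0∞) ^ p + (‖g v‖₊ : ℝ≥0∞) ^ (-p)) := by
            rw [← enorm_eq_nnnorm, ← enorm_eq_nnnorm, ← ofReal_norm, ← ofReal_norm,
              ENNReal.ofReal_rpow_of_pos hN, ENNReal.ofReal_rpow_of_pos hx]
  calc ∫⁻ g in B, (if g v = 0 then (⊤ : ℝ≥0∞) else ENNReal.ofReal |Real.log ‖g v‖|) ∂μ
      ≤ ∫⁻ g in B, ENNReal.ofReal k * ((‖g‖₊ : ℝ≥0∞) ^ p + (‖g v‖₊ : ℝ≥0∞) ^ (-p)) ∂μ :=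
        setLIntegral_mono' hBmeas hpt
    _ ≤ ∫⁻ g, ENNReal.ofReal k * ((‖g‖₊ : ℝ≥0∞) ^ p + (‖g v‖₊ : ℝ≥0∞) ^ (-p)) ∂μ :=
        setLIntegral_le_lintegral _ _
    _ = ENNReal.ofReal k *
        ((∫⁻ g, (‖g‖₊ : ℝ≥0∞) ^ p ∂μ) + ∫⁻ g, (‖g v‖₊ : ℝ≥0∞) ^ (-p) ∂μ) := by
        rw [lintegral_const_mul' _ _ ENNReal.ofReal_ne_top, lintegral_add_left hm1]
    _ ≤ ENNReal.ofReal k * (ENNReal.ofReal C + ENNReal.ofReal C) := by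
        gcongr
        exact hunder v hv

    _ ≤ ENNReal.ofReal (3 * C / p * Real.exp (-(p * T) / 2)) := by
        rw [← ENNReal.ofReal_add (by linarith) (by linarith), ← ENNReal.ofReal_mul hkpos.le]
        apply ENNReal.ofReal_le_ofReal
        have he2 : (2:ℝ) ≤ Real.exp 1 := by
          have := Real.add_one_le_exp 1; linarith
        have hEpos : 0 < Real.exp (-(p * T) / 2) := Real.exp_pos _
        rw [hk, div_mul_eq_mul_div, div_mul_eq_mul_div, div_mul_eq_mul_div,
          div_le_div_iff₀ (by positivity) hp0]
        nlinarith [mul_nonneg (mul_nonneg (by linarith : (0:ℝ) ≤ C) hEpos.le) hp0.le,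
          mul_pos hp0 hEpos, mul_pos (mul_pos hp0 hEpos) (by linarith : (0:ℝ) < C)]
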